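/- Let n be a positive integer and let a, r be non-negative integers with a ≤ n. Then the binomial coefficient C(2n, n−a) divides the integer Σ_{k=a}^{n} A_{n,k}^{2r+1}, where A_{n,k} = ((2k+1)/(2n+1))·C(2n+1, n−k). -/

import Mathlib

open Polynomial Finset

namespace CatAux

/-- Gaussian binomial coefficient as an integer polynomial. -/
noncomputable def qbin : ℕ → ℕ → ℤ[X]
  | _, 0 => 1
  | 0, _+1 => 0
  | m+1, k+1 => qbin m k + X ^ (k+1) * qbin m (k+1)

@[simp] lemma qbin_zero (m : ℕ) : qbin m 0 = 1 := by cases m <;> rfl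

@[simp] lemma qbin_zero_succ (k : ℕ) : qbin 0 (k+1) = 0 := rfl

lemma qbin_succ_succ (m k : ℕ) :
    qbin (m+1) (k+1) = qbin m k + X ^ (k+1) * qbin m (k+1) := rfl

lemma qbin_eq_zero : ∀ {m k : ℕ}, m < k → qbin m k = 0 := by
  intro m
  induction m with
  | zero => intro k hk; match k, hk with
            | k+1, _ => rfl
  | succ m ih =>
      intro k hk
      match k, hk with
      | k+1, hk =>
        rw [qbin_succ_succ, ih (by omega), ih (by omega)]
        ring

@[simp] lemma qbin_self : ∀ m : ℕ, qbin m m = 1 := by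
  intro m
  induction m with
  | zero => rfl
  | succ m ih => rw [qbin_succ_succ, ih, qbin_eq_zero (Nat.lt_succ_self m)]; ring

lemma qbin_one (m : ℕ) : qbin m 1 = ∑ i ∈ range m, X ^ i := by
  induction m with
  | zero => simp [qbin_eq_zero]
  | succ m ih =>
      rw [show (1:ℕ) = 0 + 1 from rfl, qbin_succ_succ, qbin_zero, ih,
        show m + (0+1) = m + 1 from rfl, geom_sum_succ]
      ring

/-- The second Pascal rule. -/
lemma qbin_succ_succ' : ∀ m k : ℕ, k ≤ m →
    qbin (m+1) (k+1) = X ^ (m - k) * qbin m k + qbin m (k+1) := by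
  intro m
  induction m with
  | zero => intro k hk; interval_cases k; simp [qbin_succ_succ]
  | succ m ih =>
      intro k hk
      rcases Nat.eq_or_lt_of_le hk with h | h
      · subst h
        rw [qbin_self, qbin_self, qbin_eq_zero (by omega), Nat.sub_self]
        ring
      · have hk' : k ≤ m := by omega
        cases k with
        | zero =>
            simp only [Nat.zero_add, Nat.sub_zero, qbin_zero, mul_one, qbin_one]
            rw [Finset.sum_range_succ]
            ring
        | succ k =>
            have hk2 : k + 1 ≤ m := hk'
            have hk3 : k ≤ m := by omega
            obtain ⟨t, rfl⟩ : ∃ t, m = k + 1 + t := ⟨m - (k+1), by omega⟩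
            have p1 := qbin_succ_succ (k+1+t+1) (k+1)
            have p2 := qbin_succ_succ (k+1+t) k
            have p3 := qbin_succ_succ (k+1+t) (k+1)
            have i1 := ih k hk3
            have i2 := ih (k+1) hk2
            rw [show k+1+t - k = t + 1 from by omega] at i1
            rw [show k+1+t - (k+1) = t from by omega] at i2
            rw [show k+1+t+1 - (k+1) = t + 1 from by omega]
            linear_combination p1 - (X:ℤ[X]) ^ (t+1) * p2 - p3 + i1 + (X:ℤ[X]) ^ (k+1+1) * i2

lemma qbin_symm : ∀ m k : ℕ, k ≤ m → qbin m k = qbin m (m - k) := by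
  intro m
  induction m with
  | zero => intro k hk; interval_cases k; simp
  | succ m ih =>
      intro k hk
      rcases Nat.eq_zero_or_pos k with rfl | hk0
      · simp [qbin_eq_zero]
      rcases Nat.eq_or_lt_of_le hk with h | h
      · subst h; simp
      obtain ⟨k, rfl⟩ := Nat.exists_eq_succ_of_ne_zero (Nat.pos_iff_ne_zero.mp hk0)
      have hkm : k ≤ m := by omega
      have hkm' : k + 1 ≤ m := by omega
      rw [show m + 1 - (k+1) = (m - (k+1)) + 1 from by omega, qbin_succ_succ,
        qbin_succ_succ' m (m - (k+1)) (by omega),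
        show m - (m - (k+1)) = k + 1 from by omega,
        show m - (k+1) + 1 = m - k from by omega,
        ← ih k hkm, ← ih (k+1) hkm']
      ring

lemma qbin_eval_one : ∀ m k : ℕ, (qbin m k).eval 1 = (m.choose k : ℤ) := by
  intro m
  induction m with
  | zero => intro k; cases k <;> simp
  | succ m ih =>
      intro k
      cases k with
      | zero => simp
      | succ k =>
          rw [qbin_succ_succ]
          simp [ih, Nat.choose_succ_succ, add_comm]

/-- `fac m = ∏_{i=1}^m (X^i - 1)`. -/
noncomputable def fac (m : ℕ) : ℤ[X] := ∏ i ∈ Icc 1 m, (X ^ i - 1)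

@[simp] lemma fac_zero : fac 0 = 1 := by simp [fac]

lemma fac_succ (m : ℕ) : fac (m+1) = fac m * (X ^ (m+1) - 1) := by
  rw [fac, fac, ← Finset.prod_Icc_succ_top (by omega)]

lemma qbin_mul_fac : ∀ m k : ℕ, k ≤ m → qbin m k * fac k * fac (m - k) = fac m := by
  intro m
  induction m with
  | zero => intro k hk; interval_cases k; simp
  | succ m ih =>
      intro k hk
      cases k with
      | zero => simp
      | succ k =>
        rcases Nat.eq_or_lt_of_le hk with h | h
        · have : k = m := by omega
          subst this
          simp
        have hkm : k ≤ m := by omega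
        have hk1m : k + 1 ≤ m := by omega
        have h1 := ih k hkm
        have h2 := ih (k+1) hk1m
        rw [show m - k = (m - (k+1)) + 1 from by omega, fac_succ] at h1
        rw [fac_succ] at h2
        rw [qbin_succ_succ, show m + 1 - (k+1) = (m - (k+1)) + 1 from by omega,
          fac_succ, fac_succ, fac_succ,
          show m + 1 = (k+1) + (m - (k+1) + 1) from by omega, pow_add]
        linear_combination ((X:ℤ[X]) ^ (k+1) - 1) * h1
          + (X:ℤ[X]) ^ (k+1) * ((X:ℤ[X]) ^ (m - (k+1) + 1) - 1) * h2

end CatAux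
-- Part 2: cyclotomic factorization
namespace CatAux
open Polynomial Finset

lemma cyclo_dvd_X_pow_sub_one {d : ℕ} (hd : 0 < d) : cyclotomic d ℤ ∣ X ^ d - 1 := by
  rw [← prod_cyclotomic_eq_X_pow_sub_one hd]
  exact Finset.dvd_prod_of_mem _ (Nat.mem_divisors_self d hd.ne')

lemma cyclo_not_dvd {d j : ℕ} (h0 : 0 < j) (hj : j < d) : ¬ cyclotomic d ℤ ∣ X ^ j - 1 := by
  intro h
  have h2 : cyclotomic d ℂ ∣ X ^ j - 1 := by
    have hmap := Polynomial.map_dvd (Int.castRingHom ℂ) h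
    rwa [map_cyclotomic, Polynomial.map_sub, Polynomial.map_pow, Polynomial.map_X,
      Polynomial.map_one] at hmap
  set ζ := Complex.exp (2 * Real.pi * Complex.I / d) with hζdef
  have hζ : IsPrimitiveRoot ζ d := Complex.isPrimitiveRoot_exp d (by omega)
  have hroot : (cyclotomic d ℂ).IsRoot ζ := hζ.isRoot_cyclotomic (by omega)
  obtain ⟨g, hg⟩ := h2
  have hz : ζ ^ j - 1 = 0 := by
    have := congrArg (Polynomial.eval ζ) hg
    simp only [Polynomial.eval_sub, Polynomial.eval_pow, Polynomial.eval_X,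
      Polynomial.eval_one, Polynomial.eval_mul] at this
    rw [this, Polynomial.IsRoot.eq_zero hroot, zero_mul]
  have hdvd : d ∣ j := hζ.dvd_of_pow_eq_one j (by linear_combination hz)
  exact absurd (Nat.le_of_dvd h0 hdvd) (by omega)

lemma cyclo_prime {d : ℕ} (hd : 0 < d) : Prime (cyclotomic d ℤ) :=
  UniqueFactorizationMonoid.irreducible_iff_prime.mp (cyclotomic.irreducible hd)

lemma cyclo_dvd_fac {d m : ℕ} (h0 : 0 < d) (hdm : d ≤ m) : cyclotomic d ℤ ∣ fac m :=
  dvd_trans (cyclo_dvd_X_pow_sub_one h0)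
    (Finset.dvd_prod_of_mem _ (Finset.mem_Icc.mpr ⟨h0, hdm⟩))

lemma cyclo_not_dvd_fac {d m : ℕ} (hm : m < d) : ¬ cyclotomic d ℤ ∣ fac m := by
  have hd : 0 < d := by omega
  induction m with
  | zero => simpa using (cyclo_prime hd).not_dvd_one
  | succ m ih =>
      rw [fac_succ]
      intro h
      rcases (cyclo_prime hd).dvd_mul.mp h with h' | h'
      · exact ih (by omega) h'
      · exact cyclo_not_dvd (by omega) hm h'

lemma cyclo_dvd_qbin {d j : ℕ} (h0 : 0 < j) (hj : j < d) : cyclotomic d ℤ ∣ qbin d j := by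
  have hd : 0 < d := by omega
  have h := qbin_mul_fac d j (le_of_lt hj)
  have hdvd : cyclotomic d ℤ ∣ qbin d j * fac j * fac (d - j) := by
    rw [h]; exact cyclo_dvd_fac hd le_rfl
  rcases (cyclo_prime hd).dvd_mul.mp hdvd with h' | h'
  · rcases (cyclo_prime hd).dvd_mul.mp h' with h'' | h''
    · exact h''
    · exact absurd h'' (cyclo_not_dvd_fac hj)
  · exact absurd h' (cyclo_not_dvd_fac (by omega))

lemma fac_eq_prod {B m : ℕ} (hm : m ≤ B) :
    fac m = ∏ d ∈ Icc 1 B, (cyclotomic d ℤ) ^ (m / d) := by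
  induction m with
  | zero => simp
  | succ m ih =>
      rw [fac_succ, ih (by omega)]
      have hX : (X:ℤ[X]) ^ (m+1) - 1
          = ∏ d ∈ (Icc 1 B).filter (· ∣ (m+1)), cyclotomic d ℤ := by
        rw [← prod_cyclotomic_eq_X_pow_sub_one (Nat.succ_pos m)]
        apply Finset.prod_congr ?_ (fun _ _ => rfl)
        ext d
        simp only [Nat.mem_divisors, Finset.mem_filter, Finset.mem_Icc]
        constructor
        · rintro ⟨hdvd, -⟩
          have h1 : 0 < d := Nat.pos_of_dvd_of_pos hdvd (Nat.succ_pos m)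
          have h2 : d ≤ m + 1 := Nat.le_of_dvd (Nat.succ_pos m) hdvd
          exact ⟨⟨h1, by omega⟩, hdvd⟩
        · rintro ⟨-, hdvd⟩
          exact ⟨hdvd, Nat.succ_ne_zero m⟩
      rw [hX, Finset.prod_filter, ← Finset.prod_mul_distrib]
      apply Finset.prod_congr rfl
      intro d hd
      rw [Nat.succ_div]
      split_ifs with h
      · rw [pow_add, pow_one]
      · rw [add_zero, mul_one]

lemma div_add_div_le (s t d : ℕ) (hd : 0 < d) : s / d + t / d ≤ (s + t) / d := by
  rw [Nat.le_div_iff_mul_le hd, add_mul]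
  exact add_le_add (Nat.div_mul_le_self s d) (Nat.div_mul_le_self t d)

lemma qbin_eq_prod (s t : ℕ) :
    qbin (s+t) s = ∏ d ∈ Icc 1 (s+t), (cyclotomic d ℤ) ^ ((s+t)/d - s/d - t/d) := by
  have key := qbin_mul_fac (s+t) s (by omega)
  rw [show s + t - s = t from by omega] at key
  rw [fac_eq_prod (show s ≤ s + t by omega), fac_eq_prod (show t ≤ s + t by omega),
    fac_eq_prod (le_refl (s+t))] at key
  have hsplit : ∏ d ∈ Icc 1 (s+t), (cyclotomic d ℤ) ^ ((s+t)/d)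
      = (∏ d ∈ Icc 1 (s+t), (cyclotomic d ℤ) ^ ((s+t)/d - s/d - t/d))
        * ((∏ d ∈ Icc 1 (s+t), (cyclotomic d ℤ) ^ (s/d))
          * (∏ d ∈ Icc 1 (s+t), (cyclotomic d ℤ) ^ (t/d))) := by
    rw [← Finset.prod_mul_distrib, ← Finset.prod_mul_distrib]
    apply Finset.prod_congr rfl
    intro d hd
    have hd1 : 0 < d := (Finset.mem_Icc.mp hd).1
    rw [← pow_add, ← pow_add]
    congr 1
    have := div_add_div_le s t d hd1
    omega
  rw [hsplit] at key
  have hne : (∏ d ∈ Icc 1 (s+t), (cyclotomic d ℤ) ^ (s/d))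
      * (∏ d ∈ Icc 1 (s+t), (cyclotomic d ℤ) ^ (t/d)) ≠ 0 := by
    apply mul_ne_zero <;>
    · rw [Finset.prod_ne_zero_iff]
      intro d hd
      exact pow_ne_zero _ (cyclotomic_ne_zero d ℤ)
  have key2 : qbin (s+t) s * ((∏ d ∈ Icc 1 (s+t), (cyclotomic d ℤ) ^ (s/d))
        * (∏ d ∈ Icc 1 (s+t), (cyclotomic d ℤ) ^ (t/d)))
      = (∏ d ∈ Icc 1 (s+t), (cyclotomic d ℤ) ^ ((s+t)/d - s/d - t/d))
        * ((∏ d ∈ Icc 1 (s+t), (cyclotomic d ℤ) ^ (s/d))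
          * (∏ d ∈ Icc 1 (s+t), (cyclotomic d ℤ) ^ (t/d))) := by linear_combination key
  exact mul_right_cancel₀ hne key2

lemma carry_mod {s t d : ℕ} (hd : 0 < d) (hc : (s+t)/d - s/d - t/d = 1) :
    s % d + t % d = (s+t) % d + d := by
  have hle := div_add_div_le s t d hd
  have hq : (s+t)/d = s/d + t/d + 1 := by omega
  have e1 := Nat.div_add_mod s d
  have e2 := Nat.div_add_mod t d
  have e3 := Nat.div_add_mod (s+t) d
  rw [hq] at e3
  have expand : d * (s/d + t/d + 1) = d * (s/d) + d * (t/d) + d := by ring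
  rw [expand] at e3
  linarith

end CatAux
-- Part 3: the core divisibility
namespace CatAux
open Polynomial Finset

noncomputable abbrev Qr (d : ℕ) := ℤ[X] ⧸ Ideal.span {cyclotomic d ℤ}

noncomputable def pp (d : ℕ) : ℤ[X] →+* Qr d := Ideal.Quotient.mk _

lemma pp_eq_zero {d : ℕ} {f : ℤ[X]} (h : cyclotomic d ℤ ∣ f) : pp d f = 0 :=
  Ideal.Quotient.eq_zero_iff_mem.mpr (Ideal.mem_span_singleton.mpr h)

lemma dvd_of_pp_eq_zero {d : ℕ} {f : ℤ[X]} (h : pp d f = 0) : cyclotomic d ℤ ∣ f :=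
  Ideal.mem_span_singleton.mp (Ideal.Quotient.eq_zero_iff_mem.mp h)

instance Qr_domain (d : ℕ) [NeZero d] : IsDomain (Qr d) := by
  have hp : Ideal.IsPrime (Ideal.span {cyclotomic d ℤ}) :=
    (Ideal.span_singleton_prime (cyclotomic_ne_zero d ℤ)).mpr
      (cyclo_prime (Nat.pos_of_ne_zero (NeZero.ne d)))
  exact Ideal.Quotient.isDomain _

lemma two_ne_zero_Qr (d : ℕ) (hd : 0 < d) : (2 : Qr d) ≠ 0 := by
  intro h
  have h2 : pp d (C 2) = 0 := by
    rw [show (C 2 : ℤ[X]) = (2 : ℤ[X]) by norm_num, map_ofNat]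
    exact h
  have hdvd := dvd_of_pp_eq_zero h2
  have hdeg := Polynomial.degree_le_of_dvd hdvd (Polynomial.C_ne_zero.mpr two_ne_zero)
  rw [Polynomial.degree_C (two_ne_zero), degree_cyclotomic] at hdeg
  have htot := Nat.totient_pos.mpr hd
  rw [show ((0:WithBot ℕ)) = ((0:ℕ) : WithBot ℕ) from rfl, Nat.cast_le] at hdeg
  omega

lemma xd_pow {d : ℕ} (hd : 0 < d) : (pp d X) ^ d = 1 := by
  have h : pp d (X ^ d - 1) = 0 := pp_eq_zero (cyclo_dvd_X_pow_sub_one hd)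
  rw [map_sub, map_pow, map_one, sub_eq_zero] at h
  exact h

lemma xpow_congr {d : ℕ} (hd : 0 < d) {s t : ℕ} (h : s % d = t % d) :
    (pp d X) ^ s = (pp d X) ^ t := by
  wlog hle : s ≤ t generalizing s t
  · exact (this h.symm (by omega)).symm
  obtain ⟨m, hm⟩ := (Nat.modEq_iff_dvd' hle).mp h
  rw [show t = s + d * m from by omega, pow_add, pow_mul, xd_pow hd, one_pow, mul_one]

/-- `x^(t mod d)` for integer exponents. -/
noncomputable def xe (d : ℕ) (t : ℤ) : Qr d := (pp d X) ^ (t % (d:ℤ)).toNat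

lemma xe_eq_of_emod {d : ℕ} {s t : ℤ} (h : s % (d:ℤ) = t % (d:ℤ)) : xe d s = xe d t := by
  unfold xe; rw [h]

lemma xe_congr {d : ℕ} (hd : 0 < d) {s t : ℤ} (h : (d:ℤ) ∣ s - t) : xe d s = xe d t := by
  apply xe_eq_of_emod
  have ht : t ≡ s [ZMOD (d:ℤ)] := Int.modEq_iff_dvd.mpr h
  exact ht.symm

lemma xe_natCast {d : ℕ} (hd : 0 < d) (s : ℕ) : xe d (s : ℤ) = (pp d X) ^ s := by
  unfold xe
  apply xpow_congr hd
  have h0 : (0:ℤ) ≤ (s:ℤ) % (d:ℤ) := Int.emod_nonneg _ (by exact_mod_cast hd.ne')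
  have : (((s:ℤ) % (d:ℤ)).toNat : ℤ) = ((s % d : ℕ) : ℤ) := by
    rw [Int.toNat_of_nonneg h0, Int.natCast_mod]
  have h2 : ((s:ℤ) % (d:ℤ)).toNat = s % d := by exact_mod_cast this
  rw [h2, Nat.mod_mod_of_dvd _ (dvd_refl d)]

lemma xe_add {d : ℕ} (hd : 0 < d) (s t : ℤ) : xe d (s + t) = xe d s * xe d t := by
  have hd' : (d:ℤ) ≠ 0 := by exact_mod_cast hd.ne'
  unfold xe
  rw [← pow_add]
  apply xpow_congr hd
  have h1 : (0:ℤ) ≤ s % d := Int.emod_nonneg _ hd'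
  have h2 : (0:ℤ) ≤ t % d := Int.emod_nonneg _ hd'
  have h3 : (0:ℤ) ≤ (s+t) % d := Int.emod_nonneg _ hd'
  have : ((((s+t) % d).toNat : ℤ)) % d = (((s % d).toNat : ℤ) + ((t % d).toNat : ℤ)) % d := by
    rw [Int.toNat_of_nonneg h1, Int.toNat_of_nonneg h2, Int.toNat_of_nonneg h3]
    rw [Int.emod_emod_of_dvd _ (dvd_refl _), ← Int.add_emod]
  have goal : ((s+t) % d).toNat % d = (((s % d).toNat) + ((t % d).toNat)) % d := by
    have := this
    zify
    push_cast at this ⊢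
    exact this
  exact goal

end CatAux
-- Part 3b
namespace CatAux
open Polynomial Finset

/-- zero-extended image of `qbin R ·` in the quotient ring. -/
noncomputable def gZ (d R : ℕ) (t : ℤ) : Qr d := if 0 ≤ t then pp d (qbin R t.toNat) else 0

lemma gZ_coe (d R : ℕ) (v : ℕ) : gZ d R (v : ℤ) = pp d (qbin R v) := by
  unfold gZ
  rw [if_pos (by positivity), Int.toNat_natCast]

lemma gZ_neg {d R : ℕ} {t : ℤ} (h : t < 0) : gZ d R t = 0 := by
  unfold gZ; rw [if_neg (by omega)]

lemma gZ_big {d R : ℕ} {t : ℤ} (h : (R:ℤ) < t) : gZ d R t = 0 := by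
  unfold gZ
  rcases le_or_gt 0 t with h0 | h0
  · rw [if_pos h0, qbin_eq_zero (by omega), map_zero]
  · rw [if_neg (by omega)]

lemma gZ_symm (d R : ℕ) (t : ℤ) : gZ d R t = gZ d R ((R:ℤ) - t) := by
  rcases lt_or_ge t 0 with h | h
  · rw [gZ_neg h, gZ_big (by omega)]
  rcases le_or_gt t (R:ℤ) with h2 | h2
  · obtain ⟨v, rfl⟩ : ∃ v : ℕ, t = (v:ℤ) := ⟨t.toNat, (Int.toNat_of_nonneg h).symm⟩
    have hv : v ≤ R := by exact_mod_cast h2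
    rw [gZ_coe, show (R:ℤ) - (v:ℤ) = ((R - v : ℕ) : ℤ) from (Nat.cast_sub hv).symm, gZ_coe,
      qbin_symm R v hv]
  · rw [gZ_big h2, gZ_neg (by omega)]

/-- The reflection-antisymmetric function `τ`. -/
noncomputable def tau (d R n : ℕ) (t : ℤ) : Qr d :=
  xe d (((n:ℤ) - t)^2) * gZ d R t - xe d (((n:ℤ) - t + 1)^2) * gZ d R (t - 1)

lemma tau_reflect {d R n : ℕ} (hd : 0 < d) (hR : (2*n) % d = R) (t : ℤ) :
    tau d R n ((R:ℤ) + 1 - t) = - tau d R n t := by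
  have key : (d:ℤ) ∣ 2*(n:ℤ) - (R:ℤ) := by
    have e := Nat.div_add_mod (2*n) d
    rw [hR] at e
    have e2 : (d:ℤ) * (((2*n)/d : ℕ):ℤ) + (R:ℤ) = 2*(n:ℤ) := by exact_mod_cast e
    exact ⟨(((2*n)/d : ℕ):ℤ), by linarith⟩
  unfold tau
  have e1 : xe d (((n:ℤ) - ((R:ℤ)+1-t))^2) = xe d (((n:ℤ) - t + 1)^2) := by
    apply xe_congr hd
    obtain ⟨c, hc⟩ := key
    exact ⟨c * (2*t - (R:ℤ) - 2), by linear_combination (2*t - (R:ℤ) - 2) * hc⟩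
  have e2 : xe d (((n:ℤ) - ((R:ℤ)+1-t) + 1)^2) = xe d (((n:ℤ) - t)^2) := by
    apply xe_congr hd
    obtain ⟨c, hc⟩ := key
    exact ⟨c * (2*t - (R:ℤ)), by linear_combination (2*t - (R:ℤ)) * hc⟩
  have e3 : gZ d R ((R:ℤ) + 1 - t) = gZ d R (t - 1) := by
    rw [gZ_symm d R ((R:ℤ) + 1 - t), show (R:ℤ) - ((R:ℤ)+1-t) = t - 1 from by ring]
  have e4 : gZ d R ((R:ℤ) + 1 - t - 1) = gZ d R t := by
    rw [gZ_symm d R ((R:ℤ) + 1 - t - 1), show (R:ℤ) - ((R:ℤ)+1-t-1) = t from by ring]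
  rw [e1, e2, e3, e4]
  ring

lemma tau_zero_of_big {d R n : ℕ} {t : ℤ} (h : (R:ℤ) + 2 ≤ t) : tau d R n t = 0 := by
  unfold tau
  rw [gZ_big (show (R:ℤ) < t from by omega), gZ_big (show (R:ℤ) < t - 1 from by omega),
    mul_zero, mul_zero, sub_zero]

/-- d-step Pascal rule modulo `Φ_d`. -/
lemma dstep {d : ℕ} (hd : 0 < d) :
    ∀ m k : ℕ, pp d (qbin (m + d) k)
      = (if k < d then 0 else pp d (qbin m (k - d))) + pp d (qbin m k) := by
  intro m
  induction m with
  | zero =>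
      intro k
      rcases Nat.eq_zero_or_pos k with rfl | hk0
      · simp [hd]
      rw [Nat.zero_add]
      rcases lt_trichotomy k d with h | h | h
      · rw [if_pos h, pp_eq_zero (cyclo_dvd_qbin hk0 h), qbin_eq_zero (show 0 < k from hk0)]
        simp
      · subst h
        rw [if_neg (by omega), Nat.sub_self, qbin_zero, qbin_self, qbin_eq_zero hd]
        simp
      · rw [if_neg (by omega), qbin_eq_zero (show d < k from h),
          qbin_eq_zero (show 0 < k - d from by omega), qbin_eq_zero (show 0 < k from hk0)]
        simp
  | succ m ih =>
      intro k
      rcases Nat.eq_zero_or_pos k with rfl | hk0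
      · simp [hd]
      obtain ⟨k, rfl⟩ := Nat.exists_eq_succ_of_ne_zero hk0.ne'
      have lhs : pp d (qbin (m + 1 + d) (k+1))
          = pp d (qbin (m + d) k) + (pp d X)^(k+1) * pp d (qbin (m+d) (k+1)) := by
        rw [show m + 1 + d = (m + d) + 1 from by omega, qbin_succ_succ, map_add, map_mul,
          map_pow]
      rw [lhs, ih k, ih (k+1), qbin_succ_succ, map_add, map_mul, map_pow]
      have main : (if k < d then 0 else pp d (qbin m (k - d)))
            + (pp d X)^(k+1) * (if k + 1 < d then 0 else pp d (qbin m (k + 1 - d)))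
          = (if k + 1 < d then 0 else pp d (qbin (m+1) (k + 1 - d))) := by
        rcases lt_trichotomy (k+1) d with h | h | h
        · rw [if_pos h, if_pos (by omega), if_pos h, mul_zero, add_zero]
        · rw [if_pos (by omega), if_neg (by omega), if_neg (by omega),
            show k + 1 - d = 0 from by omega, qbin_zero, qbin_zero, map_one, zero_add,
            mul_one, h, xd_pow hd]
        · rw [if_neg (by omega), if_neg (by omega), if_neg (by omega)]
          rw [show k + 1 - d = (k - d) + 1 from by omega, qbin_succ_succ, map_add, map_mul,
            map_pow]
          have hx : (pp d X)^(k+1) = (pp d X)^(k-d+1) := xpow_congr hd (by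
            have : k + 1 = (k - d + 1) + d := by omega
            rw [this, Nat.add_mod_right])
          rw [hx]
        
      calc (if k < d then 0 else pp d (qbin m (k - d))) + pp d (qbin m k)
            + (pp d X)^(k+1) * ((if k + 1 < d then 0 else pp d (qbin m (k + 1 - d)))
                + pp d (qbin m (k+1)))
          = ((if k < d then 0 else pp d (qbin m (k - d)))
              + (pp d X)^(k+1) * (if k + 1 < d then 0 else pp d (qbin m (k + 1 - d))))
            + (pp d (qbin m k) + (pp d X)^(k+1) * pp d (qbin m (k+1))) := by ring
        _ = (if k + 1 < d then 0 else pp d (qbin (m+1) (k + 1 - d)))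
            + (pp d (qbin m k) + (pp d X)^(k+1) * pp d (qbin m (k+1))) := by rw [main]

/-- q-Lucas theorem modulo `Φ_d`. -/
lemma qlucas {d : ℕ} (hd : 0 < d) {R : ℕ} (hR : R < d) :
    ∀ u k : ℕ, pp d (qbin (d * u + R) k)
      = (u.choose (k / d) : Qr d) * pp d (qbin R (k % d)) := by
  intro u
  induction u with
  | zero =>
      intro k
      rcases lt_or_ge k d with h | h
      · rw [Nat.div_eq_of_lt h, Nat.mod_eq_of_lt h]
        simp
      · rw [qbin_eq_zero (by omega), Nat.choose_eq_zero_of_lt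
          (show 0 < k / d from (Nat.one_le_div_iff hd).mpr h), map_zero]
        simp
  | succ u ih =>
      intro k
      have step : pp d (qbin (d * (u+1) + R) k)
          = (if k < d then 0 else pp d (qbin (d*u+R) (k - d))) + pp d (qbin (d*u+R) k) := by
        rw [show d * (u+1) + R = (d * u + R) + d from by ring]
        exact dstep hd _ k
      rw [step, ih k]
      rcases lt_or_ge k d with h | h
      · rw [if_pos h, zero_add, Nat.div_eq_of_lt h, Nat.choose_zero_right, Nat.choose_zero_right]
      · rw [if_neg (by omega), ih (k-d)]
        have h1 : (k - d) / d = k / d - 1 := by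
          rw [show k - d = k - d * 1 from by omega, Nat.sub_mul_div] <;> omega
        have h2 : (k - d) % d = k % d := by
          conv_rhs => rw [show k = (k - d) + d from by omega, Nat.add_mod_right]
        have h3 : 1 ≤ k / d := (Nat.one_le_div_iff hd).mpr h
        rw [h1, h2, ← add_mul]
        congr 1
        have hch : u.choose (k/d - 1) + u.choose (k/d) = (u+1).choose (k/d) := by
          rw [show k / d = (k/d - 1) + 1 from by omega]
          exact (Nat.choose_succ_succ u _).symm
        rw [← hch]
        push_cast
        ring

end CatAux
-- Part 3c: core
namespace CatAux
open Polynomial Finset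

lemma sum_tau_zero {d R n : ℕ} (hd : 0 < d) (hR : (2*n) % d = R) (r : ℕ) {c : ℕ}
    (hc : R + 1 ≤ c) :
    ∑ v ∈ range (c+1), (tau d R n (v:ℤ)) ^ (2*r+1) = 0 := by
  haveI : NeZero d := ⟨hd.ne'⟩
  have htrim : ∑ v ∈ range (c+1), (tau d R n (v:ℤ)) ^ (2*r+1)
      = ∑ v ∈ range (R+2), (tau d R n (v:ℤ)) ^ (2*r+1) := by
    symm
    apply Finset.sum_subset (Finset.range_subset_range.mpr (by omega))
    intro x hx hnx
    have hxbig : R + 2 ≤ x := by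
      simp only [Finset.mem_range] at hnx
      omega
    rw [tau_zero_of_big (show (R:ℤ) + 2 ≤ (x:ℤ) from by exact_mod_cast hxbig),
      zero_pow (by omega)]
  rw [htrim]
  set S := ∑ v ∈ range (R+2), (tau d R n (v:ℤ)) ^ (2*r+1) with hS
  have hrefl := Finset.sum_range_reflect (fun v => (tau d R n (v:ℤ)) ^ (2*r+1)) (R+2)
  have hterm : ∀ v ∈ range (R+2),
      (tau d R n ((R+2-1-v : ℕ):ℤ)) ^ (2*r+1) = - (tau d R n (v:ℤ)) ^ (2*r+1) := by
    intro v hv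
    have hv' : v ≤ R + 1 := by simp only [Finset.mem_range] at hv; omega
    have hcast : ((R+2-1-v : ℕ) : ℤ) = (R:ℤ) + 1 - v := by
      push_cast [show R + 2 - 1 - v = R + 1 - v from by omega]
      omega
    rw [hcast, tau_reflect hd hR]
    exact Odd.neg_pow (odd_two_mul_add_one r) (tau d R n (v:ℤ))
  have hneg : S = - S := by
    conv_lhs => rw [hS, ← hrefl]
    rw [Finset.sum_congr rfl hterm, Finset.sum_neg_distrib]
  have h2 : (2 : Qr d) * S = 0 := by linear_combination hneg
  rcases mul_eq_zero.mp h2 with h | h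
  · exact absurd h (two_ne_zero_Qr d hd)
  · exact h

/-- The reindexed Catalan-triangle polynomial (`j = n - k`). -/
noncomputable def Apoly (n j : ℕ) : ℤ[X] :=
  qbin (2*n) j - X ^ (2*(n-j)+1) * (if j = 0 then 0 else qbin (2*n) (j-1))

/-- The main sum, as a polynomial. -/
noncomputable def Tpoly (n a r : ℕ) : ℤ[X] :=
  ∑ j ∈ range (n - a + 1), X ^ ((n-j)^2 * (2*r+1)) * (Apoly n j) ^ (2*r+1)

lemma term_eval {d n R : ℕ} (hd : 0 < d) (hR : (2*n) % d = R) (hRd : R + 2 ≤ d) (r : ℕ)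
    {j : ℕ} (hj : j ≤ n) :
    pp d (X ^ ((n-j)^2 * (2*r+1)) * (Apoly n j) ^ (2*r+1))
      = (((2*n/d).choose (j / d) : ℕ) : Qr d) ^ (2*r+1)
          * (tau d R n ((j % d : ℕ):ℤ)) ^ (2*r+1) := by
  have hRd' : R < d := by omega
  have htop : 2*n = d * (2*n/d) + R := by
    have e := Nat.div_add_mod (2*n) d
    rw [hR] at e
    exact e.symm
  have lucas1 : pp d (qbin (2*n) j)
      = (((2*n/d).choose (j/d) : ℕ) : Qr d) * pp d (qbin R (j % d)) := by
    conv_lhs => rw [htop]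
    exact qlucas hd hRd' (2*n/d) j
  have ediv := Nat.div_add_mod j d
  have hjd : (d:ℤ) ∣ (j:ℤ) - ((j % d : ℕ):ℤ) := by
    have e2 : (d:ℤ) * ((j/d : ℕ):ℤ) + ((j % d : ℕ):ℤ) = (j:ℤ) := by exact_mod_cast ediv
    exact ⟨((j/d : ℕ):ℤ), by linarith⟩
  obtain ⟨c, hc⟩ := hjd
  have hnj : ((n - j : ℕ) : ℤ) = (n:ℤ) - (j:ℤ) := Nat.cast_sub hj
  have hxe1 : (pp d X) ^ ((n-j)^2) = xe d (((n:ℤ) - ((j % d : ℕ):ℤ))^2) := by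
    rw [← xe_natCast hd]
    apply xe_congr hd
    refine ⟨-(((n:ℤ)-(j:ℤ)) + ((n:ℤ) - ((j % d : ℕ):ℤ))) * c, ?_⟩
    rw [Nat.cast_pow, hnj]
    linear_combination (-(((n:ℤ)-(j:ℤ)) + ((n:ℤ) - ((j % d : ℕ):ℤ)))) * hc
  have hxe2 : (pp d X) ^ (2*(n-j)+1) = xe d (2*((n:ℤ) - ((j % d : ℕ):ℤ)) + 1) := by
    rw [← xe_natCast hd]
    apply xe_congr hd
    refine ⟨-2 * c, ?_⟩
    have hcast : ((2*(n-j)+1 : ℕ):ℤ) = 2*((n:ℤ)-(j:ℤ))+1 := by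
      push_cast [hnj]
      ring
    rw [hcast]
    linear_combination (-2 : ℤ) * hc
  have hcomb : xe d (((n:ℤ) - ((j % d : ℕ):ℤ))^2) * xe d (2*((n:ℤ) - ((j % d : ℕ):ℤ)) + 1)
      = xe d (((n:ℤ) - ((j % d : ℕ):ℤ) + 1)^2) := by
    rw [← xe_add hd]
    congr 1
    ring
  have H : (pp d X) ^ ((n-j)^2) * pp d (Apoly n j)
      = (((2*n/d).choose (j/d) : ℕ) : Qr d) * tau d R n ((j % d : ℕ):ℤ) := by
    unfold Apoly tau
    rw [map_sub, map_mul, map_pow, lucas1, hxe1, hxe2, gZ_coe]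
    rcases Nat.eq_zero_or_pos j with rfl | hj0
    · rw [if_pos rfl, map_zero, mul_zero,
        show ((0 % d : ℕ) : ℤ) - 1 = (-1 : ℤ) from by simp,
        gZ_neg (show (-1:ℤ) < 0 from by norm_num), mul_zero, sub_zero, sub_zero]
      ring
    · rw [if_neg hj0.ne']
      have hj1 : pp d (qbin (2*n) (j-1))
          = (((2*n/d).choose ((j-1)/d) : ℕ) : Qr d) * pp d (qbin R ((j-1) % d)) := by
        conv_lhs => rw [htop]
        exact qlucas hd hRd' (2*n/d) (j-1)
      rcases Nat.eq_zero_or_pos (j % d) with hv0 | hv0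
      · have hu1 : 1 ≤ j / d := by
          rcases Nat.eq_zero_or_pos (j/d) with h' | h'
          · rw [h', hv0] at ediv; omega
          · exact h'
        have hsplitj : j - 1 = d * (j/d - 1) + (d - 1) := by
          have e2 : d * (j/d) = d * (j/d - 1) + d := by
            conv_lhs => rw [show j/d = (j/d - 1) + 1 from by omega]
            exact Nat.mul_succ d (j/d - 1)
          omega
        have hmod : (j-1) % d = d - 1 := by
          rw [hsplitj, Nat.mul_add_mod, Nat.mod_eq_of_lt (by omega)]
        rw [hj1, hmod, qbin_eq_zero (show R < d - 1 from by omega), map_zero, mul_zero,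
          mul_zero, hv0, show ((0:ℕ):ℤ) - 1 = (-1:ℤ) from by simp,
          gZ_neg (show (-1:ℤ) < 0 from by norm_num), mul_zero, sub_zero, sub_zero]
        ring
      · have hsplitj : j - 1 = d * (j/d) + (j % d - 1) := by omega
        have hvlt : j % d - 1 < d := by
          have := Nat.mod_lt j hd
          omega
        have hdiv : (j-1)/d = j/d := by
          rw [hsplitj, Nat.mul_add_div hd, Nat.div_eq_of_lt hvlt, add_zero]
        have hmodv : (j-1) % d = j % d - 1 := by
          rw [hsplitj, Nat.mul_add_mod, Nat.mod_eq_of_lt hvlt]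
        rw [hj1, hdiv, hmodv,
          show ((j % d : ℕ):ℤ) - 1 = ((j % d - 1 : ℕ):ℤ) from by push_cast [hv0]; omega,
          gZ_coe]
        have hgoal := hcomb
        linear_combination (-(((((2*n/d).choose (j/d) : ℕ)) : Qr d)
          * pp d (qbin R (j % d - 1)))) * hgoal
  calc pp d (X ^ ((n-j)^2 * (2*r+1)) * (Apoly n j) ^ (2*r+1))
      = ((pp d X) ^ ((n-j)^2)) ^ (2*r+1) * (pp d (Apoly n j)) ^ (2*r+1) := by
        rw [map_mul, map_pow, map_pow, pow_mul]
    _ = ((pp d X) ^ ((n-j)^2) * pp d (Apoly n j)) ^ (2*r+1) := by rw [mul_pow]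
    _ = ((((2*n/d).choose (j/d) : ℕ) : Qr d) * tau d R n ((j % d : ℕ):ℤ)) ^ (2*r+1) := by
        rw [H]
    _ = _ := by rw [mul_pow]

theorem cyclo_dvd_Tpoly {d n a r : ℕ} (hd : 0 < d) (ha : a ≤ n)
    (hc : (2*n)/d - (n-a)/d - (n+a)/d = 1) :
    cyclotomic d ℤ ∣ Tpoly n a r := by
  set R := (2*n) % d with hRdef
  have hcm : (n-a) % d + (n+a) % d = (2*n) % d + d := by
    have := carry_mod (s := n-a) (t := n+a) hd (by
      rw [show (n-a)+(n+a) = 2*n from by omega]; exact hc)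
    rwa [show (n-a)+(n+a) = 2*n from by omega] at this
  have hα : R + 1 ≤ (n-a) % d := by
    have := Nat.mod_lt (n+a) hd
    omega
  have hRd : R + 2 ≤ d := by
    have h1 := Nat.mod_lt (n-a) hd
    have h2 := Nat.mod_lt (n+a) hd
    omega
  apply dvd_of_pp_eq_zero
  rw [Tpoly, map_sum]
  rw [Finset.sum_congr rfl (fun j hj => term_eval hd rfl hRd r (by
    simp only [Finset.mem_range] at hj; omega))]
  have hblock : ∀ (m c : ℕ), c ≤ d - 1 → R + 1 ≤ c →
      ∑ i ∈ range (c + 1), ((((2*n/d).choose ((d*m+i)/d) : ℕ) : Qr d) ^ (2*r+1)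
        * (tau d R n (((d*m+i) % d : ℕ):ℤ)) ^ (2*r+1))
      = 0 := by
    intro m c hc1 hc2
    have hcong : ∀ i ∈ range (c+1), ((((2*n/d).choose ((d*m+i)/d) : ℕ):Qr d)^(2*r+1)
          * (tau d R n (((d*m+i) % d : ℕ):ℤ))^(2*r+1))
        = (((2*n/d).choose m : ℕ):Qr d)^(2*r+1) * (tau d R n ((i:ℕ):ℤ))^(2*r+1) := by
      intro i hi
      have hid : i < d := by
        simp only [Finset.mem_range] at hi
        omega
      rw [Nat.mul_add_div hd, Nat.div_eq_of_lt hid, add_zero, Nat.mul_add_mod,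
        Nat.mod_eq_of_lt hid]
    rw [Finset.sum_congr rfl hcong, ← Finset.mul_sum, sum_tau_zero hd rfl r hc2, mul_zero]
  have hfull : ∀ m : ℕ, ∑ j ∈ range (d*m),
      ((((2*n/d).choose (j/d) : ℕ) : Qr d) ^ (2*r+1)
        * (tau d R n ((j % d : ℕ):ℤ)) ^ (2*r+1)) = 0 := by
    intro m
    induction m with
    | zero => simp
    | succ m ih =>
        rw [show d*(m+1) = d*m + d from by ring, Finset.range_eq_Ico,
          ← Finset.sum_Ico_consecutive _ (Nat.zero_le (d*m)) (Nat.le_add_right _ d),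
          ← Finset.range_eq_Ico, ih, zero_add, Finset.sum_Ico_eq_sum_range,
          Nat.add_sub_cancel_left]
        have hb := hblock m (d-1) le_rfl (by omega)
        rw [show (d-1)+1 = d from by omega] at hb
        exact hb
  rw [show n - a + 1 = d*((n-a)/d) + (((n-a) % d) + 1) from by
    have := Nat.div_add_mod (n-a) d; omega]
  rw [Finset.range_eq_Ico,
    ← Finset.sum_Ico_consecutive _ (Nat.zero_le (d*((n-a)/d))) (Nat.le_add_right _ _),
    ← Finset.range_eq_Ico, hfull, zero_add, Finset.sum_Ico_eq_sum_range,
    Nat.add_sub_cancel_left]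
  exact hblock ((n-a)/d) ((n-a) % d) (by have := Nat.mod_lt (n-a) hd; omega) hα

end CatAux
-- Part 4: assembly
namespace CatAux
open Polynomial Finset

lemma div_add_div_ge (s t d : ℕ) (hd : 0 < d) : (s+t)/d ≤ s/d + t/d + 1 := by
  have e1 := Nat.div_add_mod s d
  have e2 := Nat.div_add_mod t d
  have h1 := Nat.mod_lt s hd
  have h2 := Nat.mod_lt t hd
  have key : s + t < (s/d + t/d + 2) * d := by
    have expand : (s/d + t/d + 2) * d = d * (s/d) + d * (t/d) + 2*d := by ring
    rw [expand]
    omega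
  have := (Nat.div_lt_iff_lt_mul hd).mpr key
  omega

theorem qbin_dvd_Tpoly {n a r : ℕ} (ha : a ≤ n) : qbin (2*n) (n-a) ∣ Tpoly n a r := by
  classical
  have h0 := qbin_eq_prod (n-a) (n+a)
  rw [show (n-a)+(n+a) = 2*n from by omega] at h0
  set D := (Icc 1 (2*n)).filter
    (fun d => (2*n)/d - (n-a)/d - (n+a)/d = 1) with hD
  have hfact : qbin (2*n) (n-a) = ∏ d ∈ D, cyclotomic d ℤ := by
    rw [h0, hD, Finset.prod_filter]
    apply Finset.prod_congr rfl
    intro d hd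
    have hd1 : 0 < d := (Finset.mem_Icc.mp hd).1
    have hle := div_add_div_le (n-a) (n+a) d hd1
    have hge := div_add_div_ge (n-a) (n+a) d hd1
    rw [show (n-a)+(n+a) = 2*n from by omega] at hle hge
    rcases Nat.lt_or_ge ((2*n)/d) ((n-a)/d + (n+a)/d + 1) with h | h
    · have hc0 : (2*n)/d - (n-a)/d - (n+a)/d = 0 := by omega
      rw [hc0, pow_zero, if_neg (by omega)]
    · have hc1 : (2*n)/d - (n-a)/d - (n+a)/d = 1 := by omega
      rw [hc1]
      simp
  have hdvd : ∀ s : Finset ℕ, s ⊆ D → (∏ d ∈ s, cyclotomic d ℤ) ∣ Tpoly n a r := by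
    intro s
    induction s using Finset.induction with
    | empty => intro _; simp
    | insert b s hnotmem ih =>
        intro hsub
        have hbD : b ∈ D := hsub (Finset.mem_insert_self b s)
        have hsD : s ⊆ D := fun x hx => hsub (Finset.mem_insert_of_mem hx)
        have hb1 : 0 < b := by
          have := (Finset.mem_filter.mp hbD).1
          exact (Finset.mem_Icc.mp this).1
        have hbdvd : cyclotomic b ℤ ∣ Tpoly n a r := by
          apply cyclo_dvd_Tpoly hb1 ha
          exact (Finset.mem_filter.mp hbD).2
        obtain ⟨h, hh⟩ := ih hsD
        have hnd : ¬ cyclotomic b ℤ ∣ ∏ d ∈ s, cyclotomic d ℤ := by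
          intro hctr
          obtain ⟨e, he, hdvd'⟩ := (cyclo_prime hb1).exists_mem_finset_dvd hctr
          have he1 : 0 < e := by
            have := (Finset.mem_filter.mp (hsD he)).1
            exact (Finset.mem_Icc.mp this).1
          have hassoc := (cyclotomic.irreducible hb1).associated_of_dvd
            (cyclotomic.irreducible he1) hdvd'
          have heq : cyclotomic b ℤ = cyclotomic e ℤ :=
            Polynomial.eq_of_monic_of_associated (cyclotomic.monic b ℤ)
              (cyclotomic.monic e ℤ) hassoc
          have : b = e := cyclotomic_injective heq
          exact hnotmem (this ▸ he)
        have hbh : cyclotomic b ℤ ∣ h := by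
          have : cyclotomic b ℤ ∣ (∏ d ∈ s, cyclotomic d ℤ) * h := hh ▸ hbdvd
          rcases (cyclo_prime hb1).dvd_mul.mp this with h' | h'
          · exact absurd h' hnd
          · exact h'
        obtain ⟨g, hg⟩ := hbh
        rw [Finset.prod_insert hnotmem]
        exact ⟨g, by rw [hh, hg]; ring⟩
  rw [hfact]
  exact hdvd D (subset_refl D)

theorem int_dvd {n a : ℕ} (r : ℕ) (ha : a ≤ n) :
    ((2*n).choose (n-a) : ℤ) ∣ ∑ j ∈ range (n-a+1),
      (((2*n).choose j : ℤ) - if j = 0 then 0 else ((2*n).choose (j-1) : ℤ)) ^ (2*r+1) := by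
  obtain ⟨h, hh⟩ := qbin_dvd_Tpoly (r := r) ha
  refine ⟨h.eval 1, ?_⟩
  have heval := congrArg (Polynomial.eval 1) hh
  rw [Polynomial.eval_mul, qbin_eval_one] at heval
  rw [← heval, Tpoly, Polynomial.eval_finset_sum]
  apply Finset.sum_congr rfl
  intro j hj
  rw [Polynomial.eval_mul, Polynomial.eval_pow, Polynomial.eval_pow, Polynomial.eval_X,
    one_pow, one_mul]
  congr 1
  unfold Apoly
  rw [Polynomial.eval_sub, Polynomial.eval_mul, Polynomial.eval_pow, Polynomial.eval_X,
    one_pow, one_mul, qbin_eval_one, apply_ite (Polynomial.eval 1), Polynomial.eval_zero,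
    qbin_eval_one]

end CatAux
-- Part 5: glue
/-- The Catalan triangle numbers `A_{n,k} = ((2k+1)/(2n+1)) * C(2n+1, n-k)`
(as rationals), with the convention `A_{n,k} = 0` for `k > n`; these are in
fact integers. -/
def catA (n k : ℕ) : ℚ :=
  if k ≤ n then (2 * (k : ℚ) + 1) / (2 * (n : ℚ) + 1) * ((2 * n + 1).choose (n - k)) else 0

namespace CatAux
open Polynomial Finset

lemma catA_eq {n k : ℕ} (hk : k ≤ n) :
    catA n k = ((((2*n).choose (n-k) : ℤ)
      - if n - k = 0 then (0:ℤ) else ((2*n).choose (n-k-1) : ℤ) : ℤ) : ℚ) := by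
  unfold catA
  rw [if_pos hk]
  rcases Nat.eq_or_lt_of_le hk with heq | hlt
  · subst heq
    have hne : (2*(k:ℚ)+1) ≠ 0 := by positivity
    rw [Nat.sub_self]
    simp [div_self hne]
  · have hj : 0 < n - k := by omega
    rw [if_neg (by omega)]
    have key1 : (2*n+1) * ((2*n).choose (n-k-1)) = (n-k) * ((2*n+1).choose (n-k)) := by
      have h := Nat.add_one_mul_choose_eq (2*n) (n-k-1)
      rw [show n-k-1+1 = n-k from by omega] at h
      simpa [Nat.succ_eq_add_one, Nat.mul_comm] using h
    have key2 : (2*n+1).choose (n-k) = (2*n).choose (n-k-1) + (2*n).choose (n-k) := by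
      have h := Nat.choose_succ_succ (2*n) (n-k-1)
      simp only [Nat.succ_eq_add_one] at h
      rw [show n-k-1+1 = n-k from by omega] at h
      exact h
    have hZ : ((2*k+1) : ℤ) * (((2*n+1).choose (n-k) : ℕ) : ℤ)
        = (2*(n:ℤ)+1) * ((((2*n).choose (n-k) : ℕ) : ℤ) - (((2*n).choose (n-k-1) : ℕ) : ℤ)) := by
      have k1 : (2*(n:ℤ)+1) * (((2*n).choose (n-k-1) : ℕ) : ℤ)
          = ((n:ℤ) - (k:ℤ)) * (((2*n+1).choose (n-k) : ℕ) : ℤ) := by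
        have := key1
        have hnk : ((n-k : ℕ) : ℤ) = (n:ℤ) - (k:ℤ) := Nat.cast_sub hk
        rw [← hnk]
        exact_mod_cast this
      have k2 : (((2*n+1).choose (n-k) : ℕ) : ℤ)
          = (((2*n).choose (n-k-1) : ℕ) : ℤ) + (((2*n).choose (n-k) : ℕ) : ℤ) := by
        exact_mod_cast key2
      linear_combination 2 * k1 + (2*(n:ℤ)+1) * k2
    have hne : (2*(n:ℚ)+1) ≠ 0 := by positivity
    push_cast
    rw [div_mul_eq_mul_div, div_eq_iff hne]
    have hQ : ((2*(k:ℚ))+1) * (((2*n+1).choose (n-k) : ℕ) : ℚ)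
        = (2*(n:ℚ)+1) * ((((2*n).choose (n-k) : ℕ) : ℚ) - (((2*n).choose (n-k-1) : ℕ) : ℚ)) := by
      exact_mod_cast hZ
    linear_combination hQ

lemma sum_reindex {n a : ℕ} (ha : a ≤ n) (f : ℕ → ℚ) :
    ∑ k ∈ Icc a n, f k = ∑ j ∈ range (n-a+1), f (n-j) := by
  apply Finset.sum_nbij' (fun k => n - k) (fun j => n - j)
  · intro x hx
    simp only [Finset.mem_Icc] at hx
    simp only [Finset.mem_range]
    omega
  · intro x hx
    simp only [Finset.mem_range] at hx
    simp only [Finset.mem_Icc]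
    omega
  · intro x hx
    simp only [Finset.mem_Icc] at hx
    omega
  · intro x hx
    simp only [Finset.mem_range] at hx
    omega
  · intro x hx
    simp only [Finset.mem_Icc] at hx
    rw [Nat.sub_sub_self hx.2]

end CatAux

/-- Congruence (1.5) of the paper: `C(2n, n-a)` divides the integer
`∑_{k=a}^{n} A_{n,k}^{2r+1}`. -/
theorem stmt8 (n a r : ℕ) (hn : 0 < n) (ha : a ≤ n) :
    ∃ c : ℤ, ∑ k ∈ Finset.Icc a n, catA n k ^ (2 * r + 1) =
      ((2 * n).choose (n - a) : ℚ) * (c : ℚ) := by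
  obtain ⟨c, hc⟩ := CatAux.int_dvd (n := n) (a := a) r ha
  refine ⟨c, ?_⟩
  have base_eq : ∀ j ∈ Finset.range (n-a+1),
      catA n (n-j) ^ (2*r+1)
        = ((((((2*n).choose j : ℤ)
            - if j = 0 then (0:ℤ) else ((2*n).choose (j-1) : ℤ)) ^ (2*r+1) : ℤ)) : ℚ) := by
    intro j hj
    simp only [Finset.mem_range] at hj
    have hjn : j ≤ n := by omega
    rw [CatAux.catA_eq (show n - j ≤ n from by omega),
      show n - (n - j) = j from by omega, Int.cast_pow]
  calc ∑ k ∈ Finset.Icc a n, catA n k ^ (2 * r + 1)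
      = ∑ j ∈ Finset.range (n-a+1), catA n (n-j) ^ (2*r+1) :=
        CatAux.sum_reindex ha _
    _ = ∑ j ∈ Finset.range (n-a+1), ((((((2*n).choose j : ℤ)
            - if j = 0 then (0:ℤ) else ((2*n).choose (j-1) : ℤ)) ^ (2*r+1) : ℤ)) : ℚ) :=
        Finset.sum_congr rfl base_eq
    _ = (((∑ j ∈ Finset.range (n-a+1), (((2*n).choose j : ℤ)
            - if j = 0 then (0:ℤ) else ((2*n).choose (j-1) : ℤ)) ^ (2*r+1)) : ℤ) : ℚ) :=
        (Int.cast_sum _ _).symm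
    _ = ((2 * n).choose (n - a) : ℚ) * (c : ℚ) := by
        rw [hc]
        push_cast
        ring
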